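/- Assume MM-1, MM-2 and A7, let S be closed and convex, assume M := sup_{s ∈ S} ‖h(s)‖ < ∞, and set C̄ := C⋆⋆ + M·C⋆. Let s ∈ S, H ∈ ℝ^q and γ ∈ (0, v_min/(2C̄)), and set s' := Π(s + γH, B(s)) and Ē := ‖Π(s + γ h(s), B(s)) − s‖²_{B(s)} / γ². Then the one-step Lyapunov inequality holds: f(T(s')) + g(T(s')) ≤ f(T(s)) + g(T(s)) − (γ/4)(1 − 2C̄γ/v_min)·Ē + γ(1 − C̄γ/v_min)·‖H − h(s)‖²_{B(s)}. -/

import Mathlib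

open MeasureTheory Set Matrix
open scoped Matrix

/-- Cauchy–Schwarz via the discriminant trick. -/
lemma fedmm_quad_cs {A B C : ℝ} (hA : 0 ≤ A) (hC : 0 ≤ C)
    (h : ∀ t : ℝ, 0 ≤ A + 2 * t * B + t ^ 2 * C) : B ≤ Real.sqrt A * Real.sqrt C := by
  rcases hC.eq_or_lt.imp Eq.symm id with hC0 | hC0
  · by_contra hB
    push_neg at hB
    have hB0 : 0 < B := by
      have : 0 ≤ Real.sqrt A * Real.sqrt C := by positivity
      linarith
    have ht := h (-(A + 1) / (2 * B))
    have hBne : (2 : ℝ) * B ≠ 0 := by positivity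
    have hmul : 2 * (-(A + 1) / (2 * B)) * B = -(A + 1) := by field_simp
    rw [hC0] at ht
    nlinarith
  · have ht := h (-B / C)
    have h2 : B ^ 2 ≤ A * C := by
      have heq : A + 2 * (-B / C) * B + (-B / C) ^ 2 * C = A - B ^ 2 / C := by
        field_simp; ring
      rw [heq] at ht
      have hd : B ^ 2 / C ≤ A := by linarith
      calc B ^ 2 = B ^ 2 / C * C := by field_simp
        _ ≤ A * C := mul_le_mul_of_nonneg_right hd hC0.le
    calc B ≤ |B| := le_abs_self B
      _ = Real.sqrt (B ^ 2) := (Real.sqrt_sq_eq_abs B).symm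
      _ ≤ Real.sqrt (A * C) := Real.sqrt_le_sqrt h2
      _ = Real.sqrt A * Real.sqrt C := Real.sqrt_mul hA C

set_option maxHeartbeats 2000000 in
/-- One-step Lyapunov inequality for FedMM. Assume MM-1, MM-2 and A7,
`S` closed convex, `M := sup_{s ∈ S} ‖h(s)‖ < ∞` and `C̄ := C⋆⋆ + M C⋆`, where
`h(s) := E_π[S̄(Z, T s)] − s` is the mean field. For `s ∈ S`, `H ∈ ℝ^q` and
`γ ∈ (0, v_min/(2C̄))`, with `s' := Π(s + γH, B(s))` and
`Ē := ‖Π(s + γ h(s), B(s)) − s‖²_{B(s)} / γ²`, one has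
`(f+g)(T s') ≤ (f+g)(T s) − (γ/4)(1 − 2C̄γ/v_min) Ē + γ(1 − C̄γ/v_min)‖H − h(s)‖²_{B(s)}`. -/
theorem fedmm_one_step_lyapunov
    {d q p : ℕ}
    (Θ : Set (EuclideanSpace ℝ (Fin d)))
    (Sset : Set (Fin q → ℝ))
    (g : EuclideanSpace ℝ (Fin d) → EReal)
    (ψ : EuclideanSpace ℝ (Fin d) → ℝ)
    (φ : EuclideanSpace ℝ (Fin d) → Fin q → ℝ)
    (π : Measure (EuclideanSpace ℝ (Fin p))) [IsProbabilityMeasure π]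
    (ℓ : EuclideanSpace ℝ (Fin p) → EuclideanSpace ℝ (Fin d) → ℝ)
    (f : EuclideanSpace ℝ (Fin d) → ℝ)
    (barS : EuclideanSpace ℝ (Fin p) → EuclideanSpace ℝ (Fin d) → Fin q → ℝ)
    (T : (Fin q → ℝ) → EuclideanSpace ℝ (Fin d))
    (hfield : (Fin q → ℝ) → Fin q → ℝ)
    (Bmat : (Fin q → ℝ) → Matrix (Fin q) (Fin q) ℝ)
    (P : (Fin q → ℝ) → Matrix (Fin q) (Fin q) ℝ → (Fin q → ℝ))
    (Cstar Cstarstar vmin vmax M Cbar : ℝ)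
    -- g is proper lower semicontinuous convex with domain Θ
    (hg_ne_bot : ∀ x, g x ≠ ⊥)
    (hg_proper : ∃ x, g x ≠ ⊤)
    (hg_lsc : LowerSemicontinuous g)
    (hg_convex : ∀ x y : EuclideanSpace ℝ (Fin d), ∀ a b : ℝ, 0 ≤ a → 0 ≤ b → a + b = 1 →
      g (a • x + b • y) ≤ (a : EReal) * g x + (b : EReal) * g y)
    (hΘ : Θ = {x | g x ≠ ⊤})
    -- S is nonempty, closed and convex
    (hS_ne : Sset.Nonempty) (hS_closed : IsClosed Sset) (hS_convex : Convex ℝ Sset)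
    -- f(θ) = E_π[ℓ(Z,θ)]
    (hℓ_meas : Measurable (Function.uncurry ℓ))
    (hℓ_int : ∀ θ ∈ Θ, Integrable (fun z => ℓ z θ) π)
    (hf : ∀ θ, f θ = ∫ z, ℓ z θ ∂π)
    -- MM-1
    (hbarS_meas : Measurable (Function.uncurry barS))
    (hbarS_mem : ∀ z, ∀ τ ∈ Θ, barS z τ ∈ Sset)
    (hbarS_int : ∀ τ ∈ Θ, Integrable (fun z => barS z τ) π)
    (hmean_mem : ∀ τ ∈ Θ, (∫ z, barS z τ ∂π) ∈ Sset)
    (hMM1 : ∀ τ ∈ Θ, ∀ θ ∈ Θ,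
      f θ ≤ f τ + ψ θ - ψ τ - (∫ z, barS z τ ∂π) ⬝ᵥ (φ θ - φ τ))
    -- MM-2
    (hT_mem : ∀ s ∈ Sset, T s ∈ Θ)
    (hT_min : ∀ s ∈ Sset, ∀ θ : EuclideanSpace ℝ (Fin d),
      g (T s) + ((ψ (T s) - s ⬝ᵥ φ (T s) : ℝ) : EReal)
        ≤ g θ + ((ψ θ - s ⬝ᵥ φ θ : ℝ) : EReal))
    (hT_unique : ∀ s ∈ Sset, ∀ θ₀ : EuclideanSpace ℝ (Fin d),
      (∀ θ : EuclideanSpace ℝ (Fin d),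
        g θ₀ + ((ψ θ₀ - s ⬝ᵥ φ θ₀ : ℝ) : EReal)
          ≤ g θ + ((ψ θ - s ⬝ᵥ φ θ : ℝ) : EReal)) → θ₀ = T s)
    -- mean field h(s) = E_π[S̄(Z, T s)] − s
    (hhfield : ∀ s, hfield s = (∫ z, barS z (T s) ∂π) - s)
    -- A7: local linearization of φ ∘ T in the B(s)-geometry
    (hCstar : 0 < Cstar) (hCstarstar : 0 < Cstarstar)
    (hBmat_posdef : ∀ s ∈ Sset, (Bmat s).PosDef)
    (hA7_lin : ∀ s ∈ Sset, ∀ s' ∈ Sset,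
      Real.sqrt ((φ (T s') - φ (T s) - (Bmat s).mulVec (s' - s)) ⬝ᵥ
          (φ (T s') - φ (T s) - (Bmat s).mulVec (s' - s)))
        ≤ Cstar * ((s' - s) ⬝ᵥ (s' - s)))
    (hA7_bnd : ∀ s ∈ Sset, ∀ s' ∈ Sset,
      |(s' - s) ⬝ᵥ (φ (T s') - φ (T s))| ≤ Cstarstar * ((s' - s) ⬝ᵥ (s' - s)))
    (hvmin_pos : 0 < vmin) (hvminmax : vmin ≤ vmax)
    (hB_lb : ∀ s ∈ Sset, ∀ u : Fin q → ℝ, vmin * (u ⬝ᵥ u) ≤ u ⬝ᵥ (Bmat s).mulVec u)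
    (hB_ub : ∀ s ∈ Sset, ∀ u : Fin q → ℝ, u ⬝ᵥ (Bmat s).mulVec u ≤ vmax * (u ⬝ᵥ u))
    -- M = sup_{s ∈ S} ‖h(s)‖ < ∞ and C̄ = C⋆⋆ + M C⋆
    (hM_bdd : BddAbove ((fun s => Real.sqrt (hfield s ⬝ᵥ hfield s)) '' Sset))
    (hM : M = sSup ((fun s => Real.sqrt (hfield s ⬝ᵥ hfield s)) '' Sset))
    (hCbar : Cbar = Cstarstar + M * Cstar)
    -- Π(·, B(s)) is the projection on S in the B(s)-geometry
    (hP_mem : ∀ shat : Fin q → ℝ, ∀ s ∈ Sset, P shat (Bmat s) ∈ Sset)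
    (hP_min : ∀ shat : Fin q → ℝ, ∀ s ∈ Sset, ∀ t ∈ Sset,
      (P shat (Bmat s) - shat) ⬝ᵥ (Bmat s).mulVec (P shat (Bmat s) - shat)
        ≤ (t - shat) ⬝ᵥ (Bmat s).mulVec (t - shat))
    (hP_unique : ∀ shat : Fin q → ℝ, ∀ s ∈ Sset, ∀ t ∈ Sset,
      (∀ u ∈ Sset, (t - shat) ⬝ᵥ (Bmat s).mulVec (t - shat)
          ≤ (u - shat) ⬝ᵥ (Bmat s).mulVec (u - shat)) → t = P shat (Bmat s))
    -- the step
    (s : Fin q → ℝ) (hs : s ∈ Sset) (H : Fin q → ℝ)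
    (γ : ℝ) (hγ0 : 0 < γ) (hγ1 : γ < vmin / (2 * Cbar)) :
    let s' := P (s + γ • H) (Bmat s)
    let Ebar := ((P (s + γ • hfield s) (Bmat s) - s) ⬝ᵥ
        (Bmat s).mulVec (P (s + γ • hfield s) (Bmat s) - s)) / γ ^ 2
    (f (T s') : EReal) + g (T s')
      ≤ (f (T s) : EReal) + g (T s)
        + ((-(γ / 4) * (1 - 2 * Cbar * γ / vmin) * Ebar
            + γ * (1 - Cbar * γ / vmin) *
              ((H - hfield s) ⬝ᵥ (Bmat s).mulVec (H - hfield s)) : ℝ) : EReal) := by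
  intro s' Ebar
  -- basic positivity facts
  have hdotself : ∀ u : Fin q → ℝ, 0 ≤ u ⬝ᵥ u :=
    fun u => Finset.sum_nonneg fun i _ => mul_self_nonneg (u i)
  have hBsym : ∀ u v : Fin q → ℝ, u ⬝ᵥ (Bmat s).mulVec v = v ⬝ᵥ (Bmat s).mulVec u := by
    intro u v
    rw [Matrix.dotProduct_mulVec, ← Matrix.mulVec_transpose,
      show (Bmat s)ᵀ = Bmat s from (hBmat_posdef s hs).1, dotProduct_comm]
  have hQnn : ∀ u : Fin q → ℝ, 0 ≤ u ⬝ᵥ (Bmat s).mulVec u := fun u =>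
    le_trans (mul_nonneg hvmin_pos.le (hdotself u)) (hB_lb s hs u)
  have hexpand : ∀ (x y : Fin q → ℝ) (t : ℝ),
      (x + t • y) ⬝ᵥ (Bmat s).mulVec (x + t • y)
        = x ⬝ᵥ (Bmat s).mulVec x + 2 * t * (x ⬝ᵥ (Bmat s).mulVec y)
          + t ^ 2 * (y ⬝ᵥ (Bmat s).mulVec y) := by
    intro x y t
    have h4 : (x + t • y) ⬝ᵥ (Bmat s).mulVec (x + t • y)
        = x ⬝ᵥ (Bmat s).mulVec x + t * (x ⬝ᵥ (Bmat s).mulVec y)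
          + t * (y ⬝ᵥ (Bmat s).mulVec x) + t ^ 2 * (y ⬝ᵥ (Bmat s).mulVec y) := by
      simp [Matrix.mulVec_add, Matrix.mulVec_smul, add_dotProduct, dotProduct_add,
        smul_dotProduct, dotProduct_smul, smul_eq_mul]
      ring
    rw [h4, hBsym y x]; ring
  -- Cauchy-Schwarz for the B-inner product
  have csB : ∀ u v : Fin q → ℝ, u ⬝ᵥ (Bmat s).mulVec v
      ≤ Real.sqrt (u ⬝ᵥ (Bmat s).mulVec u) * Real.sqrt (v ⬝ᵥ (Bmat s).mulVec v) := by
    intro u v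
    exact fedmm_quad_cs (hQnn u) (hQnn v) fun t => by rw [← hexpand u v t]; exact hQnn _
  -- Euclidean Cauchy-Schwarz
  have csE : ∀ u v : Fin q → ℝ, u ⬝ᵥ v ≤ Real.sqrt (u ⬝ᵥ u) * Real.sqrt (v ⬝ᵥ v) := by
    intro u v
    refine fedmm_quad_cs (hdotself u) (hdotself v) fun t => ?_
    have h4 : (u + t • v) ⬝ᵥ (u + t • v)
        = u ⬝ᵥ u + 2 * t * (u ⬝ᵥ v) + t ^ 2 * (v ⬝ᵥ v) := by
      simp [add_dotProduct, dotProduct_add, smul_dotProduct, dotProduct_smul, smul_eq_mul]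
      rw [dotProduct_comm v u]; ring
    rw [← h4]; exact hdotself _
  -- variational inequality for the projection
  have vi : ∀ shat : Fin q → ℝ, ∀ t ∈ Sset,
      0 ≤ (t - P shat (Bmat s)) ⬝ᵥ (Bmat s).mulVec (P shat (Bmat s) - shat) := by
    intro shat t htmem
    set p0 := P shat (Bmat s) with hp0
    have hp0mem : p0 ∈ Sset := hP_mem shat s hs
    set c := (t - p0) ⬝ᵥ (Bmat s).mulVec (p0 - shat) with hc
    set dq := (t - p0) ⬝ᵥ (Bmat s).mulVec (t - p0) with hdq
    have key : ∀ l : ℝ, 0 ≤ l → l ≤ 1 → 0 ≤ 2 * l * c + l ^ 2 * dq := by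
      intro l hl0 hl1
      have hmem : p0 + l • (t - p0) ∈ Sset := by
        have h2 := hS_convex hp0mem htmem (by linarith : (0:ℝ) ≤ 1 - l) hl0 (by ring)
        have heq : (1 - l) • p0 + l • t = p0 + l • (t - p0) := by
          funext i
          simp [Pi.add_apply, Pi.smul_apply, Pi.sub_apply, smul_eq_mul]
          ring
        rwa [heq] at h2
      have hmin := hP_min shat s hs _ hmem
      have heq2 : p0 + l • (t - p0) - shat = (p0 - shat) + l • (t - p0) := by abel
      rw [heq2, hexpand (p0 - shat) (t - p0) l, ← hBsym (t - p0) (p0 - shat)] at hmin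
      rw [← hc, ← hdq] at hmin
      linarith
    by_contra hcneg
    push_neg at hcneg
    rcases le_or_gt dq 0 with hdqle | hdqpos
    · have := key 1 zero_le_one le_rfl; nlinarith
    · have hlpos : 0 < min 1 (-c / dq) :=
        lt_min one_pos (div_pos (neg_pos.2 hcneg) hdqpos)
      have hkey := key _ hlpos.le (min_le_left _ _)
      have hll : min 1 (-c / dq) * dq ≤ -c := by
        calc min 1 (-c / dq) * dq ≤ -c / dq * dq :=
              mul_le_mul_of_nonneg_right (min_le_right _ _) hdqpos.le
          _ = -c := div_mul_cancel₀ _ hdqpos.ne'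
      nlinarith [mul_le_mul_of_nonneg_left hll hlpos.le, mul_pos hlpos (neg_pos.2 hcneg)]
  -- memberships
  have hs'mem : s' ∈ Sset := hP_mem (s + γ • H) s hs
  set pp := P (s + γ • hfield s) (Bmat s) with hppdef
  have hppmem : pp ∈ Sset := hP_mem (s + γ • hfield s) s hs
  have hTs : T s ∈ Θ := hT_mem s hs
  have hTs' : T s' ∈ Θ := hT_mem s' hs'mem
  -- key real quantities
  set A := (s' - s) ⬝ᵥ (Bmat s).mulVec (s' - s) with hA
  set E := (pp - s) ⬝ᵥ (Bmat s).mulVec (pp - s) with hE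
  set Bq := (H - hfield s) ⬝ᵥ (Bmat s).mulVec (H - hfield s) with hBq
  have hAnn : 0 ≤ A := hQnn _
  have hEnn : 0 ≤ E := hQnn _
  have hBqnn : 0 ≤ Bq := hQnn _
  have hEbar : Ebar = E / γ ^ 2 := rfl
  -- M bounds the mean field
  have hMbd : Real.sqrt (hfield s ⬝ᵥ hfield s) ≤ M := by
    rw [hM]; exact le_csSup hM_bdd ⟨s, hs, rfl⟩
  have hMnn : 0 ≤ M := le_trans (Real.sqrt_nonneg _) hMbd
  have hCbarpos : 0 < Cbar := by
    rw [hCbar]; have := mul_nonneg hMnn hCstar.le; linarith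
  have hsmall : 2 * Cbar * γ < vmin := by
    have h2 : 0 < 2 * Cbar := by linarith
    rw [lt_div_iff₀ h2] at hγ1; linarith
  -- Step (i): descent from the projection VI with target s
  have hVI1 : A ≤ γ * ((s' - s) ⬝ᵥ (Bmat s).mulVec H) := by
    have h0 := vi (s + γ • H) s hs
    have heq : (s - P (s + γ • H) (Bmat s)) ⬝ᵥ
        (Bmat s).mulVec (P (s + γ • H) (Bmat s) - (s + γ • H))
        = -A + γ * ((s' - s) ⬝ᵥ (Bmat s).mulVec H) := by
      show (s - s') ⬝ᵥ (Bmat s).mulVec (s' - (s + γ • H)) = _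
      rw [show s - s' = -(s' - s) from (neg_sub s' s).symm,
        show s' - (s + γ • H) = (s' - s) - γ • H from by abel,
        Matrix.mulVec_sub, Matrix.mulVec_smul, neg_dotProduct, dotProduct_sub,
        dotProduct_smul, hA]
      simp [smul_eq_mul]; ring
    rw [heq] at h0; linarith
  -- Step (ii): nonexpansiveness of the projection: sqrt E ≤ sqrt A + γ sqrt Bq
  have hQv : (pp - s') ⬝ᵥ (Bmat s).mulVec (pp - s')
      ≤ γ * ((pp - s') ⬝ᵥ (Bmat s).mulVec (hfield s - H)) := by
    have h1 := vi (s + γ • H) pp hppmem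
    have h2 := vi (s + γ • hfield s) s' hs'mem
    have he1 : (pp - P (s + γ • H) (Bmat s)) ⬝ᵥ
        (Bmat s).mulVec (P (s + γ • H) (Bmat s) - (s + γ • H))
        = (pp - s') ⬝ᵥ (Bmat s).mulVec (s' - s) - γ * ((pp - s') ⬝ᵥ (Bmat s).mulVec H) := by
      show (pp - s') ⬝ᵥ (Bmat s).mulVec (s' - (s + γ • H)) = _
      rw [show s' - (s + γ • H) = (s' - s) - γ • H from by abel,
        Matrix.mulVec_sub, Matrix.mulVec_smul, dotProduct_sub, dotProduct_smul]
      simp [smul_eq_mul]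
    have he2 : (s' - P (s + γ • hfield s) (Bmat s)) ⬝ᵥ
        (Bmat s).mulVec (P (s + γ • hfield s) (Bmat s) - (s + γ • hfield s))
        = (s' - pp) ⬝ᵥ (Bmat s).mulVec (pp - s)
          - γ * ((s' - pp) ⬝ᵥ (Bmat s).mulVec (hfield s)) := by
      show (s' - pp) ⬝ᵥ (Bmat s).mulVec (pp - (s + γ • hfield s)) = _
      rw [show pp - (s + γ • hfield s) = (pp - s) - γ • hfield s from by abel,
        Matrix.mulVec_sub, Matrix.mulVec_smul, dotProduct_sub, dotProduct_smul]
      simp [smul_eq_mul]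
    rw [he1] at h1
    rw [he2] at h2
    have hsw : (s' - pp) ⬝ᵥ (Bmat s).mulVec (pp - s) = -((pp - s') ⬝ᵥ (Bmat s).mulVec (pp - s)) := by
      rw [show s' - pp = -(pp - s') from (neg_sub pp s').symm, neg_dotProduct]
    have hsw2 : (s' - pp) ⬝ᵥ (Bmat s).mulVec (hfield s)
        = -((pp - s') ⬝ᵥ (Bmat s).mulVec (hfield s)) := by
      rw [show s' - pp = -(pp - s') from (neg_sub pp s').symm, neg_dotProduct]
    rw [hsw, hsw2] at h2
    have hdec1 : (pp - s') ⬝ᵥ (Bmat s).mulVec (pp - s')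
        = (pp - s') ⬝ᵥ (Bmat s).mulVec (pp - s) - (pp - s') ⬝ᵥ (Bmat s).mulVec (s' - s) := by
      rw [show pp - s' = (pp - s) - (s' - s) from by abel]
      conv_lhs => rw [Matrix.mulVec_sub, dotProduct_sub]
    have hdec2 : (pp - s') ⬝ᵥ (Bmat s).mulVec (hfield s - H)
        = (pp - s') ⬝ᵥ (Bmat s).mulVec (hfield s) - (pp - s') ⬝ᵥ (Bmat s).mulVec H := by
      rw [Matrix.mulVec_sub, dotProduct_sub]
    rw [hdec1, hdec2]
    linarith
  have hvb : Real.sqrt ((pp - s') ⬝ᵥ (Bmat s).mulVec (pp - s')) ≤ γ * Real.sqrt Bq := by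
    set Qv := (pp - s') ⬝ᵥ (Bmat s).mulVec (pp - s') with hQvdef
    have hQvnn : 0 ≤ Qv := hQnn _
    have hBflip : (hfield s - H) ⬝ᵥ (Bmat s).mulVec (hfield s - H) = Bq := by
      rw [hBq, show hfield s - H = -(H - hfield s) from (neg_sub H (hfield s)).symm,
        Matrix.mulVec_neg, neg_dotProduct, dotProduct_neg, neg_neg]
    have hcs := csB (pp - s') (hfield s - H)
    rw [hBflip] at hcs
    by_cases h0 : Qv = 0
    · rw [h0, Real.sqrt_zero]; positivity
    · have hsq : Real.sqrt Qv * Real.sqrt Qv = Qv := Real.mul_self_sqrt hQvnn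
      have hsqpos : 0 < Real.sqrt Qv := Real.sqrt_pos.2 (lt_of_le_of_ne hQvnn (Ne.symm h0))
      nlinarith [mul_le_mul_of_nonneg_left hcs hγ0.le]
  have hEbound : E ≤ 2 * A + 2 * γ ^ 2 * Bq := by
    have hdec : E = (pp - s') ⬝ᵥ (Bmat s).mulVec (pp - s')
        + 2 * ((pp - s') ⬝ᵥ (Bmat s).mulVec (s' - s)) + A := by
      rw [hE, hA, show pp - s = (pp - s') + (s' - s) from by abel]
      have := hexpand (pp - s') (s' - s) 1
      simpa using this
    have hcs := csB (pp - s') (s' - s)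
    have hsqA : Real.sqrt A * Real.sqrt A = A := Real.mul_self_sqrt hAnn
    have hsqB : Real.sqrt Bq * Real.sqrt Bq = Bq := Real.mul_self_sqrt hBqnn
    have hsqV : Real.sqrt ((pp - s') ⬝ᵥ (Bmat s).mulVec (pp - s'))
        * Real.sqrt ((pp - s') ⬝ᵥ (Bmat s).mulVec (pp - s'))
        = (pp - s') ⬝ᵥ (Bmat s).mulVec (pp - s') := Real.mul_self_sqrt (hQnn _)
    nlinarith [hvb, Real.sqrt_nonneg ((pp - s') ⬝ᵥ (Bmat s).mulVec (pp - s')),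
      Real.sqrt_nonneg A, Real.sqrt_nonneg Bq,
      sq_nonneg (Real.sqrt A - γ * Real.sqrt Bq),
      mul_le_mul hvb (le_refl (Real.sqrt A)) (Real.sqrt_nonneg A)
        (by positivity : (0:ℝ) ≤ γ * Real.sqrt Bq)]
  -- realify g at T s and T s'
  have hgTs_ne : g (T s) ≠ ⊤ := by have := hTs; rw [hΘ] at this; exact this
  have hgTs'_ne : g (T s') ≠ ⊤ := by have := hTs'; rw [hΘ] at this; exact this
  set gs := (g (T s)).toReal with hgsdef
  set gs' := (g (T s')).toReal with hgs'def
  have hgs : g (T s) = (gs : EReal) := (EReal.coe_toReal hgTs_ne (hg_ne_bot _)).symm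
  have hgs' : g (T s') = (gs' : EReal) := (EReal.coe_toReal hgTs'_ne (hg_ne_bot _)).symm
  -- MM-2 at s' comparing T s' and T s (real form)
  have hMM2 : gs' + (ψ (T s') - s' ⬝ᵥ φ (T s')) ≤ gs + (ψ (T s) - s' ⬝ᵥ φ (T s)) := by
    have h0 := hT_min s' hs'mem (T s)
    rw [hgs, hgs', ← EReal.coe_add, ← EReal.coe_add, EReal.coe_le_coe_iff] at h0
    exact h0
  -- MM-1 with τ = T s, θ = T s'
  have hint : (∫ z, barS z (T s) ∂π) = hfield s + s := by
    have := hhfield s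
    funext i
    have hi := congrFun this i
    simp [Pi.sub_apply, Pi.add_apply] at hi ⊢
    linarith
  have hMM1' := hMM1 (T s) hTs (T s') hTs'
  rw [hint] at hMM1'
  -- combine: Delta bound
  have hDelta : f (T s') + gs' ≤ f (T s) + gs
      + (s' - s) ⬝ᵥ (φ (T s') - φ (T s)) - hfield s ⬝ᵥ (φ (T s') - φ (T s)) := by
    have he1 : (hfield s + s) ⬝ᵥ (φ (T s') - φ (T s))
        = hfield s ⬝ᵥ (φ (T s') - φ (T s)) + s ⬝ᵥ (φ (T s') - φ (T s)) := add_dotProduct _ _ _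
    have he2 : (s' - s) ⬝ᵥ (φ (T s') - φ (T s))
        = s' ⬝ᵥ (φ (T s') - φ (T s)) - s ⬝ᵥ (φ (T s') - φ (T s)) := sub_dotProduct _ _ _
    have he3 : s' ⬝ᵥ (φ (T s') - φ (T s)) = s' ⬝ᵥ φ (T s') - s' ⬝ᵥ φ (T s) :=
      dotProduct_sub _ _ _
    rw [he1] at hMM1'
    rw [he2, he3]
    linarith
  -- bound the two dot-product terms
  have hub : vmin * ((s' - s) ⬝ᵥ (s' - s)) ≤ A := hB_lb s hs (s' - s)
  have huu : (s' - s) ⬝ᵥ (s' - s) ≤ A / vmin := by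
    rw [le_div_iff₀ hvmin_pos]; linarith
  have hterm1 : (s' - s) ⬝ᵥ (φ (T s') - φ (T s)) ≤ Cstarstar * (A / vmin) := by
    have h0 := hA7_bnd s hs s' hs'mem
    have h1 : (s' - s) ⬝ᵥ (φ (T s') - φ (T s)) ≤ Cstarstar * ((s' - s) ⬝ᵥ (s' - s)) :=
      le_trans (le_abs_self _) h0
    have := mul_le_mul_of_nonneg_left huu hCstarstar.le
    linarith
  -- decompose φ(T s') - φ(T s) = B u + R
  set R := φ (T s') - φ (T s) - (Bmat s).mulVec (s' - s) with hRdef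
  have hphidec : φ (T s') - φ (T s) = (Bmat s).mulVec (s' - s) + R := by rw [hRdef]; abel
  have hterm2 : -(hfield s ⬝ᵥ (φ (T s') - φ (T s)))
      ≤ -(A / γ) + Real.sqrt A * Real.sqrt Bq + M * Cstar * (A / vmin) := by
    have hd : hfield s ⬝ᵥ (φ (T s') - φ (T s))
        = hfield s ⬝ᵥ (Bmat s).mulVec (s' - s) + hfield s ⬝ᵥ R := by
      rw [hphidec, dotProduct_add]
    -- bound on h . B u
    have hb1 : A / γ - Real.sqrt A * Real.sqrt Bq ≤ hfield s ⬝ᵥ (Bmat s).mulVec (s' - s) := by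
      rw [← hBsym (s' - s) (hfield s)]
      have hdec : (s' - s) ⬝ᵥ (Bmat s).mulVec (hfield s)
          = (s' - s) ⬝ᵥ (Bmat s).mulVec H - (s' - s) ⬝ᵥ (Bmat s).mulVec (H - hfield s) := by
        rw [Matrix.mulVec_sub, dotProduct_sub]; ring
      have h1 : A / γ ≤ (s' - s) ⬝ᵥ (Bmat s).mulVec H := by
        rw [div_le_iff₀ hγ0]; linarith [hVI1]
      have h2 : (s' - s) ⬝ᵥ (Bmat s).mulVec (H - hfield s) ≤ Real.sqrt A * Real.sqrt Bq :=
        csB (s' - s) (H - hfield s)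
      rw [hdec]; linarith
    -- bound on h . R
    have hb2 : -(hfield s ⬝ᵥ R) ≤ M * Cstar * (A / vmin) := by
      have hcs : -(hfield s ⬝ᵥ R) ≤ Real.sqrt (hfield s ⬝ᵥ hfield s) * Real.sqrt (R ⬝ᵥ R) := by
        have := csE (-(hfield s)) R
        rw [neg_dotProduct] at this
        rwa [show (-(hfield s)) ⬝ᵥ (-(hfield s)) = hfield s ⬝ᵥ hfield s from by
          rw [neg_dotProduct, dotProduct_neg, neg_neg]] at this
      have hR : Real.sqrt (R ⬝ᵥ R) ≤ Cstar * ((s' - s) ⬝ᵥ (s' - s)) := hA7_lin s hs s' hs'mem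
      have hstep : Real.sqrt (hfield s ⬝ᵥ hfield s) * Real.sqrt (R ⬝ᵥ R)
          ≤ M * (Cstar * ((s' - s) ⬝ᵥ (s' - s))) :=
        mul_le_mul hMbd hR (Real.sqrt_nonneg _) hMnn
      have hstep2 : M * (Cstar * ((s' - s) ⬝ᵥ (s' - s))) ≤ M * Cstar * (A / vmin) := by
        have := mul_le_mul_of_nonneg_left huu (mul_nonneg hMnn hCstar.le)
        linarith [this]
      linarith
    linarith
  -- final arithmetic
  have hsA : Real.sqrt A * Real.sqrt A = A := Real.mul_self_sqrt hAnn
  have hsB : Real.sqrt Bq * Real.sqrt Bq = Bq := Real.mul_self_sqrt hBqnn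
  have hre : Cbar * (A / vmin) = Cstarstar * (A / vmin) + M * Cstar * (A / vmin) := by
    rw [hCbar]; ring
  have hDelta2 : f (T s') + gs' ≤ f (T s) + gs
      + (Cbar * (A / vmin) - A / γ + Real.sqrt A * Real.sqrt Bq) := by
    linarith [hDelta, hterm1, hterm2, hre]
  have harith : Cbar * (A / vmin) - A / γ + Real.sqrt A * Real.sqrt Bq
      ≤ -(γ / 4) * (1 - 2 * Cbar * γ / vmin) * (E / γ ^ 2)
        + γ * (1 - Cbar * γ / vmin) * Bq := by
    rw [← sub_nonneg]
    have hkey : 0 ≤ -(vmin - 2 * Cbar * γ) * E + 4 * γ ^ 2 * (vmin - Cbar * γ) * Bq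
        - (4 * γ * Cbar * A - 4 * vmin * A
          + 4 * γ * vmin * (Real.sqrt A * Real.sqrt Bq)) := by
      have hexp : (Real.sqrt A - γ * Real.sqrt Bq) ^ 2
          = A - 2 * γ * (Real.sqrt A * Real.sqrt Bq) + γ ^ 2 * Bq := by
        have h0 : (Real.sqrt A - γ * Real.sqrt Bq) ^ 2
            = Real.sqrt A * Real.sqrt A - 2 * γ * (Real.sqrt A * Real.sqrt Bq)
              + γ ^ 2 * (Real.sqrt Bq * Real.sqrt Bq) := by ring
        rw [h0, hsA, hsB]
      have hP2 : 0 ≤ A - 2 * γ * (Real.sqrt A * Real.sqrt Bq) + γ ^ 2 * Bq :=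
        hexp ▸ sq_nonneg (Real.sqrt A - γ * Real.sqrt Bq)
      nlinarith [mul_nonneg (by linarith : (0:ℝ) ≤ vmin - 2 * Cbar * γ)
          (by linarith : (0:ℝ) ≤ 2 * A + 2 * γ ^ 2 * Bq - E),
        mul_nonneg hvmin_pos.le hP2]
    have heq : -(γ / 4) * (1 - 2 * Cbar * γ / vmin) * (E / γ ^ 2)
          + γ * (1 - Cbar * γ / vmin) * Bq
          - (Cbar * (A / vmin) - A / γ + Real.sqrt A * Real.sqrt Bq)
        = (-(vmin - 2 * Cbar * γ) * E + 4 * γ ^ 2 * (vmin - Cbar * γ) * Bq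
            - (4 * γ * Cbar * A - 4 * vmin * A
              + 4 * γ * vmin * (Real.sqrt A * Real.sqrt Bq))) / (4 * γ * vmin) := by
      field_simp
    rw [heq]
    exact div_nonneg hkey (by positivity)
  rw [hgs, hgs', hEbar, ← EReal.coe_add, ← EReal.coe_add, ← EReal.coe_add,
    EReal.coe_le_coe_iff]
  linarith [hDelta2, harith]
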